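/- Let g(∂,λ) ∈ ℂ[∂,λ] be a polynomial in two variables satisfying (∂+λ+μ)·g(∂,λ) = (∂+2μ)·g(∂+μ,λ) for all values of the formal variables ∂, λ, μ. Then g = 0. -/
import Mathlib


/-- If g(∂,λ) ∈ ℂ[∂,λ] satisfies (∂+λ+μ)·g(∂,λ) = (∂+2μ)·g(∂+μ,λ) identically
(as polynomials in ∂,λ,μ, equivalently for all complex values since ℂ is infinite),
then g = 0. -/
theorem stmt_0 (g : MvPolynomial (Fin 2) ℂ)
    (h : ∀ d l m : ℂ,
      (d + l + m) * MvPolynomial.eval ![d, l] g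
        = (d + 2 * m) * MvPolynomial.eval ![d + m, l] g) :
    g = 0 := by
  -- Case l ≠ 0: take m = 0.
  have h0 : ∀ d l : ℂ, l ≠ 0 → MvPolynomial.eval ![d, l] g = 0 := by
    intro d l hl
    have h1 := h d l 0
    simp only [add_zero, mul_zero] at h1
    have h2 : MvPolynomial.eval ![d, l] g * l = 0 := by linear_combination h1
    exact (mul_eq_zero.mp h2).resolve_right hl
  -- Case l = 0, d ≠ 0: take m = -d/2.
  have hd : ∀ d : ℂ, d ≠ 0 → MvPolynomial.eval ![d, 0] g = 0 := by
    intro d hdne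
    have h2 := h d 0 (-d / 2)
    have h3 : (d / 2) * MvPolynomial.eval ![d, 0] g = 0 := by
      linear_combination h2
    rcases mul_eq_zero.mp h3 with h4 | h4
    · exact absurd (by linear_combination 2 * h4) hdne
    · exact h4
  -- Case d = 0, l = 0: take d = 0, l = 0, m = 1 together with g(1,0)=0.
  have h00 : MvPolynomial.eval ![(0:ℂ), 0] g = 0 := by
    have h1 := h 0 0 1
    norm_num at h1
    rw [h1, hd 1 one_ne_zero, mul_zero]
  have key : ∀ d l : ℂ, MvPolynomial.eval ![d, l] g = 0 := by
    intro d l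
    rcases eq_or_ne l 0 with rfl | hl
    · rcases eq_or_ne d 0 with rfl | hdne
      · exact h00
      · exact hd d hdne
    · exact h0 d l hl
  apply MvPolynomial.funext
  intro x
  have hx : x = ![x 0, x 1] := by
    funext i; fin_cases i <;> simp
  rw [map_zero, hx]
  exact key (x 0) (x 1)
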